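/- The Hilbert map ρ : ℝᵐ → ℝᵈ is proper (the preimage of every compact subset of ℝᵈ is compact), and its image ρ(ℝᵐ) is a closed subset of ℝᵈ. -/
import Mathlib


/-- The action of an `m × m` real matrix on `ℝᵐ` (as Euclidean space). -/
noncomputable def mact {m : ℕ} (A : Matrix (Fin m) (Fin m) ℝ)
    (x : EuclideanSpace ℝ (Fin m)) : EuclideanSpace ℝ (Fin m) :=
  (WithLp.equiv 2 (Fin m → ℝ)).symm (A.mulVec ((WithLp.equiv 2 (Fin m → ℝ)) x))

/-- The Hilbert map `ρ = (ρ₁,…,ρ_d) : ℝᵐ → ℝᵈ` associated to polynomials `ρ₁,…,ρ_d`. -/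
noncomputable def evalMap {m d : ℕ} (ρp : Fin d → MvPolynomial (Fin m) ℝ)
    (x : EuclideanSpace ℝ (Fin m)) : EuclideanSpace ℝ (Fin d) :=
  (WithLp.equiv 2 (Fin d → ℝ)).symm (fun j => MvPolynomial.eval (fun i => x i) (ρp j))

/-- Evaluating `aeval ρp Q` at a point amounts to evaluating `Q` at the values of the `ρp j`. -/
lemma eval_aeval_eq {m d : ℕ} (g : Fin m → ℝ) (ρp : Fin d → MvPolynomial (Fin m) ℝ)
    (Q : MvPolynomial (Fin d) ℝ) :
    MvPolynomial.eval g (MvPolynomial.aeval ρp Q) =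
      MvPolynomial.eval (fun j => MvPolynomial.eval g (ρp j)) Q := by
  induction Q using MvPolynomial.induction_on with
  | C a => simp [MvPolynomial.algebraMap_eq]
  | add p q hp hq => simp only [map_add, hp, hq]
  | mul_X p j hp => simp only [map_mul, hp, MvPolynomial.aeval_X, MvPolynomial.eval_X]

/-- The Hilbert map `ρ : ℝᵐ → ℝᵈ` of a closed subgroup `K ≤ O(m)` is proper, and its image
`ρ(ℝᵐ)` is closed in `ℝᵈ`. -/
theorem stmt8 (m d : ℕ) (hm : 1 ≤ m)
    (K : Subgroup (Matrix.orthogonalGroup (Fin m) ℝ))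
    (hK : IsClosed (K : Set (Matrix.orthogonalGroup (Fin m) ℝ)))
    (ρp : Fin d → MvPolynomial (Fin m) ℝ)
    (hρinv : ∀ j, ∀ k ∈ K, ∀ x : EuclideanSpace ℝ (Fin m),
      MvPolynomial.eval (fun i => mact (k : Matrix (Fin m) (Fin m) ℝ) x i) (ρp j) =
        MvPolynomial.eval (fun i => x i) (ρp j))
    (hρgen : ∀ P : MvPolynomial (Fin m) ℝ,
      (∀ k ∈ K, ∀ x : EuclideanSpace ℝ (Fin m),
        MvPolynomial.eval (fun i => mact (k : Matrix (Fin m) (Fin m) ℝ) x i) P =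
          MvPolynomial.eval (fun i => x i) P) →
      P ∈ Algebra.adjoin ℝ (Set.range ρp)) :
    (∀ C : Set (EuclideanSpace ℝ (Fin d)), IsCompact C → IsCompact (evalMap ρp ⁻¹' C)) ∧
    IsClosed (Set.range (evalMap ρp)) := by
  classical
  -- Continuity of the Hilbert map
  have hcont : Continuous (evalMap ρp) := by
    apply (PiLp.continuous_toLp 2 (fun _ : Fin d => ℝ)).comp
    exact continuous_pi fun j =>
      (MvPolynomial.continuous_eval _).comp (PiLp.continuous_ofLp 2 (fun _ : Fin m => ℝ))
  -- The norm-squared polynomial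
  set Pn : MvPolynomial (Fin m) ℝ := ∑ i, MvPolynomial.X i ^ 2 with hPn
  have hPeval : ∀ v : Fin m → ℝ, MvPolynomial.eval v Pn = dotProduct v v := by
    intro v; simp [hPn, dotProduct, sq]
  have hevalP : ∀ x : EuclideanSpace ℝ (Fin m),
      MvPolynomial.eval (fun i => x i) Pn = ‖x‖ ^ 2 := by
    intro x
    rw [EuclideanSpace.norm_eq, Real.sq_sqrt (by positivity)]
    simp [hPn, Real.norm_eq_abs, sq_abs]
  -- `Pn` is invariant under `K` (in fact under all of `O(m)`)
  have hPinv : ∀ k ∈ K, ∀ x : EuclideanSpace ℝ (Fin m),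
      MvPolynomial.eval (fun i => mact (k : Matrix (Fin m) (Fin m) ℝ) x i) Pn =
        MvPolynomial.eval (fun i => x i) Pn := by
    intro k _ x
    have hA : (k : Matrix (Fin m) (Fin m) ℝ).transpose * (k : Matrix (Fin m) (Fin m) ℝ) = 1 := by
      simpa [Matrix.star_eq_conjTranspose] using k.2.1
    have hmact : (fun i => mact (k : Matrix (Fin m) (Fin m) ℝ) x i) =
        ((k : Matrix (Fin m) (Fin m) ℝ).mulVec fun j => x j) := rfl
    rw [hmact, hPeval, hPeval, Matrix.dotProduct_mulVec, Matrix.vecMul_mulVec, hA,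
      Matrix.vecMul_one]
  -- Express `Pn` as a polynomial in the `ρp j`
  obtain ⟨Q, hQ⟩ : ∃ Q, MvPolynomial.aeval ρp Q = Pn := by
    have h := hρgen Pn hPinv
    rwa [Algebra.adjoin_range_eq_range_aeval, AlgHom.mem_range] at h
  have hnorm : ∀ x : EuclideanSpace ℝ (Fin m),
      ‖x‖ ^ 2 = MvPolynomial.eval (fun j => evalMap ρp x j) Q := by
    intro x
    rw [← hevalP x, ← hQ, eval_aeval_eq]
    rfl
  -- Properness
  have hproper : ∀ C : Set (EuclideanSpace ℝ (Fin d)), IsCompact C →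
      IsCompact (evalMap ρp ⁻¹' C) := by
    intro C hC
    have hclosed : IsClosed (evalMap ρp ⁻¹' C) := hC.isClosed.preimage hcont
    have hQcont : ContinuousOn (fun y : EuclideanSpace ℝ (Fin d) =>
        MvPolynomial.eval (fun j => y j) Q) C :=
      ((MvPolynomial.continuous_eval _).comp
        (PiLp.continuous_ofLp 2 (fun _ : Fin d => ℝ))).continuousOn
    obtain ⟨M, hM⟩ := hC.exists_bound_of_continuousOn hQcont
    have hsub : evalMap ρp ⁻¹' C ⊆ Metric.closedBall 0 (Real.sqrt M) := by
      intro x hx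
      have h1 : ‖x‖ ^ 2 ≤ M := by
        rw [hnorm x]
        calc MvPolynomial.eval (fun j => evalMap ρp x j) Q
            ≤ ‖MvPolynomial.eval (fun j => evalMap ρp x j) Q‖ := le_abs_self _
          _ ≤ M := hM _ hx
      have : ‖x‖ ≤ Real.sqrt M := by
        rw [← Real.sqrt_sq (norm_nonneg x)]
        exact Real.sqrt_le_sqrt h1
      simpa [Metric.mem_closedBall] using this
    exact (isCompact_closedBall (0 : EuclideanSpace ℝ (Fin m)) _).of_isClosed_subset
      hclosed hsub
  refine ⟨hproper, ?_⟩
  have hPM : IsProperMap (evalMap ρp) :=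
    isProperMap_iff_isCompact_preimage.mpr ⟨hcont, fun _ hC => hproper _ hC⟩
  simpa [Set.image_univ] using hPM.isClosedMap Set.univ isClosed_univ
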